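/- For any real α with 1/2 ≤ α < 1, the Mertens function satisfies M(x) ≪ x^α as x → ∞ if and only if g(x) ≪ x^{α-1} as x → ∞. -/

import Mathlib

open MeasureTheory Filter Asymptotics Set

noncomputable def M (x : ℝ) : ℝ :=
  ∑ n ∈ Finset.Icc 1 ⌊x⌋₊, (ArithmeticFunction.moebius n : ℝ)

noncomputable def g (x : ℝ) : ℝ :=
  ∑ n ∈ Finset.Icc 1 ⌊x⌋₊, (ArithmeticFunction.moebius n : ℝ) / n

namespace MertensAux

open Finset Topology

noncomputable def Mn (N : ℕ) : ℝ := ∑ n ∈ Finset.Icc 1 N, (ArithmeticFunction.moebius n : ℝ)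

noncomputable def gn (N : ℕ) : ℝ := ∑ n ∈ Finset.Icc 1 N, (ArithmeticFunction.moebius n : ℝ) / n

lemma M_eq (x : ℝ) : M x = Mn ⌊x⌋₊ := rfl
lemma g_eq (x : ℝ) : g x = gn ⌊x⌋₊ := rfl
lemma M_nat (N : ℕ) : M (N : ℝ) = Mn N := by rw [M_eq, Nat.floor_natCast]
lemma g_nat (N : ℕ) : g (N : ℝ) = gn N := by rw [g_eq, Nat.floor_natCast]

lemma Mn_zero : Mn 0 = 0 := by simp [Mn]
lemma gn_zero : gn 0 = 0 := by simp [gn]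

lemma abs_moebius_le (n : ℕ) : |(ArithmeticFunction.moebius n : ℝ)| ≤ 1 := by
  exact_mod_cast ArithmeticFunction.abs_moebius_le_one (n := n)

lemma abs_Mn_le (N : ℕ) : |Mn N| ≤ N := by
  calc |Mn N| ≤ ∑ n ∈ Finset.Icc 1 N, |(ArithmeticFunction.moebius n : ℝ)| :=
        Finset.abs_sum_le_sum_abs _ _
    _ ≤ ∑ n ∈ Finset.Icc 1 N, 1 := Finset.sum_le_sum fun n _ => abs_moebius_le n
    _ ≤ N := by simp [Nat.card_Icc]

lemma abs_gn_le (N : ℕ) : |gn N| ≤ N := by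
  calc |gn N| ≤ ∑ n ∈ Finset.Icc 1 N, |(ArithmeticFunction.moebius n : ℝ) / n| :=
        Finset.abs_sum_le_sum_abs _ _
    _ ≤ ∑ n ∈ Finset.Icc 1 N, 1 := by
        refine Finset.sum_le_sum fun n hn => ?_
        have hn1 : 1 ≤ n := (Finset.mem_Icc.mp hn).1
        have hn0 : (1:ℝ) ≤ (n:ℝ) := by exact_mod_cast hn1
        rw [abs_div]
        rw [abs_of_pos (show (0:ℝ) < (n:ℝ) by linarith)]
        calc |(ArithmeticFunction.moebius n : ℝ)| / (n:ℝ) ≤ 1 / (n:ℝ) :=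
              div_le_div_of_nonneg_right (abs_moebius_le n) (by linarith)
          _ ≤ 1 := by
              rw [div_le_one (by linarith)]; exact hn0
    _ ≤ N := by simp [Nat.card_Icc]

/-- split off top term, valid for all `N` when `f 0 = 0`. -/
lemma sum_Icc_eq_pred_add (f : ℕ → ℝ) (hf : f 0 = 0) (N : ℕ) :
    ∑ n ∈ Finset.Icc 1 N, f n = ∑ n ∈ Finset.Icc 1 (N - 1), f n + f N := by
  cases N with
  | zero => simp [hf]
  | succ N => simpa using Finset.sum_Icc_succ_top (by omega) f

lemma sum_range_eq_Icc (f : ℕ → ℝ) (hf : f 0 = 0) (N : ℕ) :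
    ∑ n ∈ Finset.range N, f n = ∑ n ∈ Finset.Icc 1 (N - 1), f n := by
  induction N with
  | zero => simp
  | succ N ih =>
      rw [Finset.sum_range_succ, ih, Nat.succ_sub_one]
      exact (sum_Icc_eq_pred_add f hf N).symm

/-- Discrete Abel summation. -/
lemma abel_sum (a φ : ℕ → ℝ) (N : ℕ) :
    ∑ n ∈ Finset.Icc 1 N, a n * φ n
      = (∑ n ∈ Finset.Icc 1 N, a n) * φ N
        + ∑ n ∈ Finset.Icc 1 (N - 1), (∑ k ∈ Finset.Icc 1 n, a k) * (φ n - φ (n + 1)) := by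
  induction N with
  | zero => simp
  | succ N ih =>
      have h1 : ∑ n ∈ Finset.Icc 1 (N+1), a n * φ n
          = ∑ n ∈ Finset.Icc 1 N, a n * φ n + a (N+1) * φ (N+1) :=
        Finset.sum_Icc_succ_top (by omega) _
      have h2 : ∑ n ∈ Finset.Icc 1 (N+1), a n
          = ∑ n ∈ Finset.Icc 1 N, a n + a (N+1) :=
        Finset.sum_Icc_succ_top (by omega) _
      have h3 : ∑ n ∈ Finset.Icc 1 N, (∑ k ∈ Finset.Icc 1 n, a k) * (φ n - φ (n + 1))
          = ∑ n ∈ Finset.Icc 1 (N-1), (∑ k ∈ Finset.Icc 1 n, a k) * (φ n - φ (n + 1))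
            + (∑ k ∈ Finset.Icc 1 N, a k) * (φ N - φ (N + 1)) :=
        sum_Icc_eq_pred_add _ (by simp) N
      rw [h1, ih, Nat.succ_sub_one, h2, h3]
      ring

/-- MVT for rpow on `[a, a+1]`. -/
lemma rpow_slope {a : ℝ} (p : ℝ) (ha : 1 ≤ a) :
    ∃ c, a < c ∧ c < a + 1 ∧ (a + 1) ^ p - a ^ p = p * c ^ (p - 1) := by
  have hab : a < a + 1 := by linarith
  have hcont : ContinuousOn (fun x : ℝ => x ^ p) (Set.Icc a (a + 1)) := by
    intro x hx
    have hx0 : x ≠ 0 := by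
      have := hx.1; intro h; rw [h] at this; linarith
    exact (Real.continuousAt_rpow_const x p (Or.inl hx0)).continuousWithinAt
  have hderiv : ∀ x ∈ Set.Ioo a (a + 1),
      HasDerivAt (fun x : ℝ => x ^ p) (p * x ^ (p - 1)) x := fun x hx =>
    Real.hasDerivAt_rpow_const (Or.inl (by have := hx.1; intro h; rw [h] at this; linarith))
  obtain ⟨c, hc, hc'⟩ := exists_hasDerivAt_eq_slope (fun x : ℝ => x ^ p)
    (fun x => p * x ^ (p - 1)) hab hcont hderiv
  refine ⟨c, hc.1, hc.2, ?_⟩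
  rw [hc']; simp

lemma rpow_succ_sub_ge {a : ℝ} {p : ℝ} (ha : 1 ≤ a) (hp0 : 0 ≤ p) (hp1 : p ≤ 1) :
    p * (a + 1) ^ (p - 1) ≤ (a + 1) ^ p - a ^ p := by
  obtain ⟨c, hc1, hc2, hc3⟩ := rpow_slope p ha
  rw [hc3]
  have : (a + 1) ^ (p - 1) ≤ c ^ (p - 1) :=
    Real.rpow_le_rpow_of_nonpos (by linarith) (by linarith) (by linarith)
  exact mul_le_mul_of_nonneg_left this hp0

lemma rpow_sub_succ_ge {a : ℝ} {p : ℝ} (ha : 1 ≤ a) (hp : p ≤ 0) :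
    (-p) * (a + 1) ^ (p - 1) ≤ a ^ p - (a + 1) ^ p := by
  obtain ⟨c, hc1, hc2, hc3⟩ := rpow_slope p ha
  have h1 : a ^ p - (a + 1) ^ p = (-p) * c ^ (p - 1) := by rw [← neg_sub, hc3]; ring
  rw [h1]
  have : (a + 1) ^ (p - 1) ≤ c ^ (p - 1) :=
    Real.rpow_le_rpow_of_nonpos (by linarith) (by linarith) (by linarith)
  exact mul_le_mul_of_nonneg_left this (by linarith)

lemma rpow_sub_succ_le {a : ℝ} {p : ℝ} (ha : 1 ≤ a) (hp : p ≤ 0) :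
    a ^ p - (a + 1) ^ p ≤ (-p) * a ^ (p - 1) := by
  obtain ⟨c, hc1, hc2, hc3⟩ := rpow_slope p ha
  have h1 : a ^ p - (a + 1) ^ p = (-p) * c ^ (p - 1) := by rw [← neg_sub, hc3]; ring
  rw [h1]
  have : c ^ (p - 1) ≤ a ^ (p - 1) :=
    Real.rpow_le_rpow_of_nonpos (by linarith) (by linarith) (by linarith)
  exact mul_le_mul_of_nonneg_left this (by linarith)

lemma rpow_sub_succ_nonneg {a : ℝ} {p : ℝ} (ha : 1 ≤ a) (hp : p ≤ 0) :
    0 ≤ a ^ p - (a + 1) ^ p := by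
  refine le_trans ?_ (rpow_sub_succ_ge ha hp)
  exact mul_nonneg (neg_nonneg.mpr hp) (Real.rpow_nonneg (by linarith) _)

/-- `∑_{n=1}^N n^(p-1) ≤ N^p / p` for `0 < p ≤ 1`. -/
lemma sum_rpow_le {p : ℝ} (hp0 : 0 < p) (hp1 : p ≤ 1) (N : ℕ) :
    ∑ n ∈ Finset.Icc 1 N, ((n : ℝ)) ^ (p - 1) ≤ (N : ℝ) ^ p / p := by
  induction N with
  | zero => simp [Real.zero_rpow (ne_of_gt hp0)]
  | succ N ih =>
      rw [Finset.sum_Icc_succ_top (by omega)]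
      have hcast : ((N + 1 : ℕ) : ℝ) = (N : ℝ) + 1 := by push_cast; ring
      have key : p * ((N:ℝ) + 1) ^ (p - 1) ≤ ((N:ℝ) + 1) ^ p - (N:ℝ) ^ p := by
        rcases Nat.eq_zero_or_pos N with h0 | h1
        · subst h0
          simp only [Nat.cast_zero, zero_add, Real.one_rpow,
            Real.zero_rpow (ne_of_gt hp0), sub_zero]
          simpa using hp1
        · exact rpow_succ_sub_ge (by exact_mod_cast h1) (le_of_lt hp0) hp1
      rw [hcast]
      have : ((N:ℝ) + 1) ^ (p - 1) ≤ (((N:ℝ) + 1) ^ p - (N:ℝ) ^ p) / p :=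
        (le_div_iff₀' hp0).mpr key
      have hsplit : (((N:ℝ) + 1) ^ p - (N:ℝ) ^ p) / p = ((N:ℝ)+1)^p/p - (N:ℝ)^p/p :=
        sub_div _ _ _
      linarith [ih, this]

lemma single_rpow_le {q : ℝ} (hq : q < -1) {n : ℕ} (hn : 1 ≤ n) :
    (n : ℝ) ^ q ≤ ((2:ℝ) ^ (-q) / (-(q+1))) * ((n:ℝ) ^ (q+1) - ((n:ℝ)+1) ^ (q+1)) := by
  have hn1 : (1:ℝ) ≤ (n:ℝ) := by exact_mod_cast hn
  have hn0 : (0:ℝ) < (n:ℝ) := by linarith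
  have hq1 : q + 1 ≤ 0 := by linarith
  have h1 : (-(q+1)) * ((n:ℝ) + 1) ^ q ≤ (n:ℝ) ^ (q+1) - ((n:ℝ)+1) ^ (q+1) := by
    have := rpow_sub_succ_ge (p := q + 1) hn1 hq1
    simpa using this
  have h2 : (2:ℝ) ^ q * (n:ℝ) ^ q ≤ ((n:ℝ) + 1) ^ q := by
    have h2n : ((n:ℝ)) + 1 ≤ 2 * (n:ℝ) := by linarith
    have := Real.rpow_le_rpow_of_nonpos (by linarith : (0:ℝ) < (n:ℝ)+1) h2n (by linarith : q ≤ 0)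
    calc (2:ℝ) ^ q * (n:ℝ) ^ q = (2 * (n:ℝ)) ^ q := (Real.mul_rpow (by norm_num) hn0.le).symm
      _ ≤ ((n:ℝ) + 1) ^ q := this
  have hpos : (0:ℝ) < -(q+1) := by linarith
  have hb : (-(q+1)) ≠ 0 := ne_of_gt hpos
  have h3 : (-(q+1)) * ((2:ℝ)^q * (n:ℝ)^q) ≤ (n:ℝ)^(q+1) - ((n:ℝ)+1)^(q+1) :=
    le_trans (mul_le_mul_of_nonneg_left h2 hpos.le) h1
  have hkey : (2:ℝ)^(-q) * (2:ℝ)^q = 1 := by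
    rw [← Real.rpow_add (by norm_num)]; simp
  have hcpos : (0:ℝ) < (2:ℝ)^(-q) / (-(q+1)) :=
    div_pos (Real.rpow_pos_of_pos (by norm_num) _) hpos
  have heq : ((2:ℝ)^(-q) / (-(q+1))) * ((-(q+1)) * ((2:ℝ)^q * (n:ℝ)^q)) = (n:ℝ)^q := by
    rw [div_mul_eq_mul_div, mul_comm (-(q+1)) ((2:ℝ)^q * (n:ℝ)^q), ← mul_assoc,
      mul_div_assoc, div_self hb, mul_one, ← mul_assoc, hkey, one_mul]
  calc (n:ℝ)^q = ((2:ℝ)^(-q) / (-(q+1))) * ((-(q+1)) * ((2:ℝ)^q * (n:ℝ)^q)) := heq.symm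
    _ ≤ ((2:ℝ)^(-q) / (-(q+1))) * ((n:ℝ)^(q+1) - ((n:ℝ)+1)^(q+1)) :=
        mul_le_mul_of_nonneg_left h3 hcpos.le

lemma tail_summable {q : ℝ} (hq : q < -1) (N : ℕ) :
    Summable (fun k : ℕ => ((N + k : ℕ) : ℝ) ^ q) := by
  have : (fun k : ℕ => ((N + k : ℕ) : ℝ) ^ q) = fun k : ℕ => ((k + N : ℕ) : ℝ) ^ q := by
    funext k; rw [Nat.add_comm]
  rw [this]
  exact (summable_nat_add_iff N).mpr (Real.summable_nat_rpow.mpr hq)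

lemma tail_tsum_le {q : ℝ} (hq : q < -1) {N : ℕ} (hN : 1 ≤ N) :
    ∑' k : ℕ, ((N + k : ℕ) : ℝ) ^ q ≤ ((2:ℝ) ^ (-q) / (-(q+1))) * (N : ℝ) ^ (q+1) := by
  set c : ℝ := (2:ℝ) ^ (-q) / (-(q+1)) with hc
  have hcpos : 0 < c := by
    apply div_pos (Real.rpow_pos_of_pos (by norm_num) _); linarith
  have hrange : ∀ K : ℕ, ∑ k ∈ Finset.range K, ((N + k : ℕ) : ℝ) ^ q ≤ c * (N : ℝ) ^ (q+1) := by
    intro K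
    have htel : ∑ k ∈ Finset.range K,
        (c * ((N + k : ℕ) : ℝ) ^ (q+1) - c * ((N + (k+1) : ℕ) : ℝ) ^ (q+1))
        = c * ((N : ℝ)) ^ (q+1) - c * ((N + K : ℕ) : ℝ) ^ (q+1) := by
      have := Finset.sum_range_sub' (fun k => c * ((N + k : ℕ) : ℝ) ^ (q+1)) K
      simpa using this
    have hstep : ∀ k : ℕ, ((N + k : ℕ) : ℝ) ^ q
        ≤ c * ((N + k : ℕ) : ℝ) ^ (q+1) - c * ((N + (k+1) : ℕ) : ℝ) ^ (q+1) := by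
      intro k
      have h1 : 1 ≤ N + k := by omega
      have := single_rpow_le hq h1
      have hcast : ((N + (k+1) : ℕ) : ℝ) = ((N + k : ℕ) : ℝ) + 1 := by push_cast; ring
      rw [hcast]
      calc ((N + k : ℕ) : ℝ) ^ q
          ≤ c * (((N+k:ℕ):ℝ) ^ (q+1) - (((N+k:ℕ):ℝ)+1) ^ (q+1)) := this
        _ = c * ((N + k : ℕ) : ℝ) ^ (q+1) - c * (((N+k:ℕ):ℝ) + 1) ^ (q+1) := by ring
    calc ∑ k ∈ Finset.range K, ((N + k : ℕ) : ℝ) ^ q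
        ≤ ∑ k ∈ Finset.range K,
            (c * ((N + k : ℕ) : ℝ) ^ (q+1) - c * ((N + (k+1) : ℕ) : ℝ) ^ (q+1)) :=
          Finset.sum_le_sum fun k _ => hstep k
      _ = c * ((N : ℝ)) ^ (q+1) - c * ((N + K : ℕ) : ℝ) ^ (q+1) := htel
      _ ≤ c * (N : ℝ) ^ (q+1) := by
          have : 0 ≤ c * ((N + K : ℕ) : ℝ) ^ (q+1) :=
            mul_nonneg hcpos.le (Real.rpow_nonneg (by positivity) _)
          linarith
  refine (tail_summable hq N).tsum_le_of_sum_le fun s => ?_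
  obtain ⟨K, hK⟩ := s.exists_nat_subset_range
  calc ∑ k ∈ s, ((N + k : ℕ) : ℝ) ^ q
      ≤ ∑ k ∈ Finset.range K, ((N + k : ℕ) : ℝ) ^ q :=
        Finset.sum_le_sum_of_subset_of_nonneg hK fun k _ _ => Real.rpow_nonneg (by positivity) _
    _ ≤ c * (N : ℝ) ^ (q+1) := hrange K

/-! ### Abel summation applications -/

lemma gn_eq (N : ℕ) :
    gn N = Mn N * ((N:ℝ))⁻¹
      + ∑ n ∈ Finset.Icc 1 (N - 1), Mn n * (((n:ℝ))⁻¹ - ((n:ℝ) + 1)⁻¹) := by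
  have h := abel_sum (fun n => (ArithmeticFunction.moebius n : ℝ)) (fun n => ((n:ℝ))⁻¹) N
  have h0 : gn N = ∑ n ∈ Finset.Icc 1 N,
      (ArithmeticFunction.moebius n : ℝ) * ((n:ℝ))⁻¹ :=
    Finset.sum_congr rfl fun n _ => div_eq_mul_inv _ _
  rw [h0, h]
  congr 1
  refine Finset.sum_congr rfl fun n _ => ?_
  have : ((n + 1 : ℕ) : ℝ) = (n:ℝ) + 1 := by push_cast; ring
  rw [this]; rfl

lemma Mn_eq (N : ℕ) :
    Mn N = gn N * (N:ℝ) - ∑ n ∈ Finset.Icc 1 (N - 1), gn n := by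
  have h := abel_sum (fun n => (ArithmeticFunction.moebius n : ℝ) / n) (fun n => ((n:ℝ))) N
  have h0 : Mn N = ∑ n ∈ Finset.Icc 1 N,
      (ArithmeticFunction.moebius n : ℝ) / n * (n:ℝ) := by
    refine Finset.sum_congr rfl fun n hn => ?_
    have hn1 : 1 ≤ n := (Finset.mem_Icc.mp hn).1
    have : (n:ℝ) ≠ 0 := by positivity
    field_simp
  rw [h0, h, sub_eq_add_neg]
  congr 1
  rw [← Finset.sum_neg_distrib]
  refine Finset.sum_congr rfl fun n _ => ?_
  have : ((n + 1 : ℕ) : ℝ) = (n:ℝ) + 1 := by push_cast; ring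
  rw [this]
  show gn n * ((n:ℝ) - ((n:ℝ) + 1)) = - gn n
  ring

lemma dir_eq (s : ℝ) (N : ℕ) :
    ∑ n ∈ Finset.Icc 1 N, (ArithmeticFunction.moebius n : ℝ) * (n:ℝ) ^ (-s)
      = Mn N * (N:ℝ) ^ (-s)
        + ∑ n ∈ Finset.Icc 1 (N - 1), Mn n * ((n:ℝ) ^ (-s) - ((n:ℝ) + 1) ^ (-s)) := by
  have h := abel_sum (fun n => (ArithmeticFunction.moebius n : ℝ))
    (fun n => ((n:ℝ)) ^ (-s)) N
  rw [h]
  congr 1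
  refine Finset.sum_congr rfl fun n _ => ?_
  have : ((n + 1 : ℕ) : ℝ) = (n:ℝ) + 1 := by push_cast; ring
  rw [this]; rfl

/-! ### Dirichlet series facts -/

lemma moebius_summable {s : ℝ} (hs : 1 < s) :
    Summable (fun n : ℕ => (ArithmeticFunction.moebius n : ℝ) * (n:ℝ) ^ (-s)) := by
  refine Summable.of_norm_bounded (g := fun n : ℕ => (n:ℝ) ^ (-s))
    (Real.summable_nat_rpow.mpr (by linarith)) fun n => ?_
  have h0 : (0:ℝ) ≤ (n:ℝ) ^ (-s) := Real.rpow_nonneg (Nat.cast_nonneg n) _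
  calc ‖(ArithmeticFunction.moebius n : ℝ) * (n:ℝ) ^ (-s)‖
      = |(ArithmeticFunction.moebius n : ℝ)| * |(n:ℝ) ^ (-s)| := abs_mul _ _
    _ ≤ 1 * (n:ℝ) ^ (-s) := by
        rw [abs_of_nonneg h0]
        exact mul_le_mul_of_nonneg_right (abs_moebius_le n) h0
    _ = (n:ℝ) ^ (-s) := one_mul _

lemma hs_bound {α C : ℝ} (hα0 : 0 < α) (hα2 : α < 1) (hC : 0 < C)
    (hMb : ∀ N : ℕ, 1 ≤ N → |Mn N| ≤ C * (N:ℝ) ^ α)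
    {s : ℝ} (hs1 : 1 ≤ s) (hs2 : s ≤ 2) (n : ℕ) :
    |Mn n * ((n:ℝ) ^ (-s) - ((n:ℝ) + 1) ^ (-s))| ≤ 2 * C * (n:ℝ) ^ (α - 2) := by
  rcases Nat.eq_zero_or_pos n with rfl | hn
  · simp [Mn_zero, Real.zero_rpow (show α - 2 ≠ 0 by intro h; linarith)]
  · have hn1 : (1:ℝ) ≤ (n:ℝ) := by exact_mod_cast hn
    have hn0 : (0:ℝ) < (n:ℝ) := by linarith
    have hd0 : 0 ≤ (n:ℝ) ^ (-s) - ((n:ℝ) + 1) ^ (-s) :=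
      rpow_sub_succ_nonneg hn1 (by linarith)
    have hd1 : (n:ℝ) ^ (-s) - ((n:ℝ) + 1) ^ (-s) ≤ s * (n:ℝ) ^ (-s - 1) := by
      have := rpow_sub_succ_le (p := -s) hn1 (by linarith)
      simpa using this
    have hd2 : (n:ℝ) ^ (-s - 1) ≤ (n:ℝ) ^ (-2 : ℝ) :=
      Real.rpow_le_rpow_of_exponent_le hn1 (by linarith)
    have hd3 : (n:ℝ) ^ (-s) - ((n:ℝ) + 1) ^ (-s) ≤ 2 * (n:ℝ) ^ (-2 : ℝ) := by
      calc (n:ℝ) ^ (-s) - ((n:ℝ) + 1) ^ (-s) ≤ s * (n:ℝ) ^ (-s - 1) := hd1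
        _ ≤ 2 * (n:ℝ) ^ (-2 : ℝ) := by
            have h1 : s * (n:ℝ) ^ (-s - 1) ≤ s * (n:ℝ) ^ (-2:ℝ) :=
              mul_le_mul_of_nonneg_left hd2 (by linarith)
            have h2 : s * (n:ℝ) ^ (-2:ℝ) ≤ 2 * (n:ℝ) ^ (-2:ℝ) :=
              mul_le_mul_of_nonneg_right hs2 (Real.rpow_nonneg hn0.le _)
            linarith
    rw [abs_mul, abs_of_nonneg hd0]
    calc |Mn n| * ((n:ℝ) ^ (-s) - ((n:ℝ) + 1) ^ (-s))
        ≤ (C * (n:ℝ) ^ α) * (2 * (n:ℝ) ^ (-2 : ℝ)) :=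
          mul_le_mul (hMb n hn) hd3 hd0 (by positivity)
      _ = 2 * C * ((n:ℝ) ^ α * (n:ℝ) ^ (-2 : ℝ)) := by ring
      _ = 2 * C * (n:ℝ) ^ (α - 2) := by
          rw [← Real.rpow_add hn0, show α + -2 = α - 2 by ring]

lemma bound_summable {α C : ℝ} (hα2 : α < 1) :
    Summable (fun n : ℕ => 2 * C * (n:ℝ) ^ (α - 2)) :=
  (Real.summable_nat_rpow.mpr (by linarith)).mul_left _

lemma dir_tsum {α C : ℝ} (hα0 : 0 < α) (hα2 : α < 1) (hC : 0 < C)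
    (hMb : ∀ N : ℕ, 1 ≤ N → |Mn N| ≤ C * (N:ℝ) ^ α)
    {s : ℝ} (hs1 : 1 < s) (hs2 : s ≤ 2) :
    ∑' n : ℕ, Mn n * ((n:ℝ) ^ (-s) - ((n:ℝ) + 1) ^ (-s))
      = ∑' n : ℕ, (ArithmeticFunction.moebius n : ℝ) * (n:ℝ) ^ (-s) := by
  have hsum1 := moebius_summable hs1
  have hsum2 : Summable (fun n : ℕ => Mn n * ((n:ℝ) ^ (-s) - ((n:ℝ) + 1) ^ (-s))) :=
    Summable.of_norm_bounded (bound_summable hα2 (C := C))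
      (hs_bound hα0 hα2 hC hMb hs1.le hs2)
  set L : ℝ := ∑' n : ℕ, (ArithmeticFunction.moebius n : ℝ) * (n:ℝ) ^ (-s) with hL
  have hf0 : (ArithmeticFunction.moebius 0 : ℝ) * ((0:ℕ):ℝ) ^ (-s) = 0 := by simp
  have t1 : Tendsto (fun N : ℕ => ∑ n ∈ Finset.Icc 1 N,
      (ArithmeticFunction.moebius n : ℝ) * (n:ℝ) ^ (-s)) atTop (𝓝 L) := by
    have h := hsum1.hasSum.tendsto_sum_nat
    have h2 := h.comp (tendsto_add_atTop_nat 1)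
    refine h2.congr fun N => ?_
    show ∑ n ∈ Finset.range (N + 1), _ = _
    rw [sum_range_eq_Icc _ hf0 (N+1), Nat.succ_sub_one]
  have t2 : Tendsto (fun N : ℕ => Mn N * (N:ℝ) ^ (-s)) atTop (𝓝 0) := by
    have hlim : Tendsto (fun N : ℕ => (N:ℝ) ^ (1 - s)) atTop (𝓝 0) := by
      have h := (tendsto_rpow_neg_atTop (by linarith : (0:ℝ) < s - 1)).comp
        (tendsto_natCast_atTop_atTop (R := ℝ))
      refine h.congr fun N => ?_
      show ((N:ℝ)) ^ (-(s-1)) = _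
      norm_num
    refine squeeze_zero_norm' ?_ hlim
    filter_upwards [eventually_ge_atTop 1] with N hN
    have hN1 : (1:ℝ) ≤ (N:ℝ) := by exact_mod_cast hN
    have hN0 : (0:ℝ) < (N:ℝ) := by linarith
    have hnn : (0:ℝ) ≤ (N:ℝ) ^ (-s) := Real.rpow_nonneg hN0.le _
    calc ‖Mn N * (N:ℝ) ^ (-s)‖ = |Mn N| * (N:ℝ) ^ (-s) := by
          rw [Real.norm_eq_abs, abs_mul, abs_of_nonneg hnn]
      _ ≤ (N:ℝ) * (N:ℝ) ^ (-s) := mul_le_mul_of_nonneg_right (abs_Mn_le N) hnn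
      _ = (N:ℝ) ^ (1 - s) := by
          rw [show (N:ℝ) * (N:ℝ) ^ (-s) = (N:ℝ) ^ (1:ℝ) * (N:ℝ) ^ (-s) by
            rw [Real.rpow_one], ← Real.rpow_add hN0, show (1:ℝ) + -s = 1 - s by ring]
  have t3 : Tendsto (fun N : ℕ => ∑ n ∈ Finset.Icc 1 (N - 1),
      Mn n * ((n:ℝ) ^ (-s) - ((n:ℝ) + 1) ^ (-s))) atTop (𝓝 L) := by
    have h := t1.sub t2
    rw [sub_zero] at h
    refine h.congr fun N => ?_
    rw [dir_eq s N]; ring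
  have t4 : Tendsto (fun N : ℕ => ∑ n ∈ Finset.Icc 1 (N - 1),
      Mn n * ((n:ℝ) ^ (-s) - ((n:ℝ) + 1) ^ (-s))) atTop
      (𝓝 (∑' n : ℕ, Mn n * ((n:ℝ) ^ (-s) - ((n:ℝ) + 1) ^ (-s)))) := by
    have h := hsum2.hasSum.tendsto_sum_nat
    refine h.congr fun N => ?_
    exact sum_range_eq_Icc _ (by simp [Mn_zero]) N
  exact tendsto_nhds_unique t4 t3

lemma Ltsum_eq {s : ℝ} (hs : 1 < s) :
    ((∑' n : ℕ, (ArithmeticFunction.moebius n : ℝ) * (n:ℝ) ^ (-s) : ℝ) : ℂ)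
      = (riemannZeta (s:ℂ))⁻¹ := by
  have hres : 1 < (s:ℂ).re := by simpa using hs
  rw [Complex.ofReal_tsum]
  have hterm : ∀ n : ℕ,
      (((ArithmeticFunction.moebius n : ℝ) * (n:ℝ) ^ (-s) : ℝ) : ℂ)
        = LSeries.term (fun n : ℕ => ((ArithmeticFunction.moebius n : ℤ) : ℂ)) (s:ℂ) n := by
    intro n
    rcases eq_or_ne n 0 with rfl | hn
    · simp
    · rw [LSeries.term_of_ne_zero hn, Complex.ofReal_mul,
        Complex.ofReal_cpow (Nat.cast_nonneg n), Complex.ofReal_neg]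
      push_cast
      rw [Complex.cpow_neg, div_eq_mul_inv]
  rw [tsum_congr hterm]
  show LSeries _ (s:ℂ) = _
  refine eq_inv_of_mul_eq_one_right ?_
  rw [← ArithmeticFunction.LSeries_zeta_eq_riemannZeta hres]
  exact ArithmeticFunction.LSeries_zeta_mul_Lseries_moebius hres

lemma T_zero {α C : ℝ} (hα0 : 0 < α) (hα2 : α < 1) (hC : 0 < C)
    (hMb : ∀ N : ℕ, 1 ≤ N → |Mn N| ≤ C * (N:ℝ) ^ α) :
    ∑' n : ℕ, Mn n * (((n:ℝ))⁻¹ - ((n:ℝ) + 1)⁻¹) = 0 := by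
  set sj : ℕ → ℝ := fun j => 1 + ((j:ℝ) + 1)⁻¹ with hsjdef
  have hsj1 : ∀ j, 1 < sj j := fun j => by
    have h : (0:ℝ) < ((j:ℝ) + 1)⁻¹ := by positivity
    simp only [hsjdef]; linarith
  have hsj2 : ∀ j, sj j ≤ 2 := fun j => by
    have h1 : ((j:ℝ) + 1)⁻¹ ≤ 1 := by
      rw [inv_le_one_iff₀]; right; have : (0:ℝ) ≤ (j:ℝ) := Nat.cast_nonneg j; linarith
    simp only [hsjdef]; linarith
  have hsjlim : Tendsto sj atTop (𝓝 1) := by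
    have h : Tendsto (fun j : ℕ => ((j:ℝ) + 1)⁻¹) atTop (𝓝 0) := by
      have := tendsto_one_div_add_atTop_nhds_zero_nat (𝕜 := ℝ)
      simpa [one_div] using this
    have h2 := (tendsto_const_nhds : Tendsto (fun _ : ℕ => (1:ℝ)) atTop (𝓝 1)).add h
    simpa using h2
  have hpoint : ∀ n : ℕ, Tendsto
      (fun j => Mn n * ((n:ℝ) ^ (-(sj j)) - ((n:ℝ) + 1) ^ (-(sj j)))) atTop
      (𝓝 (Mn n * (((n:ℝ))⁻¹ - ((n:ℝ) + 1)⁻¹))) := by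
    intro n
    have hneg : Tendsto (fun j => -(sj j)) atTop (𝓝 (-1 : ℝ)) := hsjlim.neg
    rcases Nat.eq_zero_or_pos n with rfl | hn
    · simp only [Mn_zero, zero_mul]
      exact tendsto_const_nhds
    · have hb : (0:ℝ) < (n:ℝ) := by exact_mod_cast hn
      have hc1 : ContinuousAt (fun t : ℝ => (n:ℝ) ^ t) (-1 : ℝ) :=
        Real.continuousAt_const_rpow (ne_of_gt hb)
      have hc2 : ContinuousAt (fun t : ℝ => ((n:ℝ) + 1) ^ t) (-1 : ℝ) :=
        Real.continuousAt_const_rpow (by positivity)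
      have hl1 : Tendsto (fun j => (n:ℝ) ^ (-(sj j))) atTop (𝓝 ((n:ℝ) ^ (-1:ℝ))) :=
        (hc1.tendsto).comp hneg
      have hl2 : Tendsto (fun j => ((n:ℝ) + 1) ^ (-(sj j))) atTop
          (𝓝 (((n:ℝ) + 1) ^ (-1:ℝ))) := (hc2.tendsto).comp hneg
      have := (hl1.sub hl2).const_mul (Mn n)
      simpa [Real.rpow_neg_one] using this
  have hbd : ∀ᶠ j in atTop, ∀ n : ℕ,
      ‖Mn n * ((n:ℝ) ^ (-(sj j)) - ((n:ℝ) + 1) ^ (-(sj j)))‖ ≤ 2 * C * (n:ℝ) ^ (α - 2) :=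
    Eventually.of_forall fun j n => hs_bound hα0 hα2 hC hMb (hsj1 j).le (hsj2 j) n
  have hdom := tendsto_tsum_of_dominated_convergence
    (bound_summable hα2 (C := C)) hpoint hbd
  -- the other limit : the same sequence of sums tends to 0
  have hcast : Tendsto (fun j => ((sj j : ℝ) : ℂ)) atTop (𝓝[≠] (1:ℂ)) := by
    rw [tendsto_nhdsWithin_iff]
    constructor
    · have h := (Complex.continuous_ofReal.tendsto 1).comp hsjlim
      exact h
    · refine Eventually.of_forall fun j => ?_
      simp only [Set.mem_compl_iff, Set.mem_singleton_iff]
      intro h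
      have : sj j = 1 := by exact_mod_cast h
      exact (hsj1 j).ne' this
  have hres := riemannZeta_residue_one.comp hcast
  have hinv := hres.inv₀ one_ne_zero
  have hsub : Tendsto (fun j => ((sj j : ℝ) : ℂ) - 1) atTop (𝓝 0) := by
    have h := (Complex.continuous_ofReal.tendsto 1).comp hsjlim
    have h2 := h.sub_const 1
    simpa using h2
  have hmul := hsub.mul hinv
  rw [zero_mul] at hmul
  have hζinv : Tendsto (fun j => (riemannZeta ((sj j : ℝ) : ℂ))⁻¹) atTop (𝓝 0) := by
    refine Tendsto.congr (fun j => ?_) (by simpa using hmul)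
    have hne1 : ((sj j : ℝ) : ℂ) - 1 ≠ 0 := by
      intro h
      have h2 : ((sj j : ℝ) : ℂ) = 1 := by linear_combination h
      have : sj j = 1 := by exact_mod_cast h2
      exact (hsj1 j).ne' this
    have hre : 1 < (((sj j : ℝ) : ℂ)).re := by simpa using hsj1 j
    have hne2 : riemannZeta ((sj j : ℝ) : ℂ) ≠ 0 := riemannZeta_ne_zero_of_one_lt_re hre
    show (((sj j : ℝ) : ℂ) - 1) * ((riemannZeta ((sj j : ℝ) : ℂ))⁻¹ * (((sj j : ℝ) : ℂ) - 1)⁻¹)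
        = (riemannZeta ((sj j : ℝ) : ℂ))⁻¹
    rw [mul_comm ((riemannZeta ((sj j : ℝ) : ℂ))⁻¹), ← mul_assoc,
      mul_inv_cancel₀ hne1, one_mul]
  have hz : Tendsto (fun j => ∑' n : ℕ,
      Mn n * ((n:ℝ) ^ (-(sj j)) - ((n:ℝ) + 1) ^ (-(sj j)))) atTop (𝓝 0) := by
    have heq : ∀ j, ∑' n : ℕ, Mn n * ((n:ℝ) ^ (-(sj j)) - ((n:ℝ) + 1) ^ (-(sj j)))
        = ∑' n : ℕ, (ArithmeticFunction.moebius n : ℝ) * (n:ℝ) ^ (-(sj j)) :=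
      fun j => dir_tsum hα0 hα2 hC hMb (hsj1 j) (hsj2 j)
    have hcplx : Tendsto (fun j => ((∑' n : ℕ,
        (ArithmeticFunction.moebius n : ℝ) * (n:ℝ) ^ (-(sj j)) : ℝ) : ℂ)) atTop (𝓝 0) := by
      refine hζinv.congr fun j => ?_
      exact (Ltsum_eq (hsj1 j)).symm
    have hre := (Complex.continuous_re.tendsto 0).comp hcplx
    simp only [Complex.zero_re] at hre
    have hre2 : Tendsto (fun j => ∑' n : ℕ,
        (ArithmeticFunction.moebius n : ℝ) * (n:ℝ) ^ (-(sj j))) atTop (𝓝 0) := by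
      refine hre.congr fun j => ?_
      simp [Function.comp]
    refine hre2.congr fun j => (heq j).symm
  exact tendsto_nhds_unique hdom hz

/-! ### Globalization and transfer -/

lemma globalize {f : ℕ → ℝ} {p : ℝ}
    (hf : (fun N : ℕ => f N) =O[atTop] fun N : ℕ => (N:ℝ) ^ p)
    (hcrude : ∀ N : ℕ, |f N| ≤ N) :
    ∃ C : ℝ, 0 < C ∧ ∀ N : ℕ, 1 ≤ N → |f N| ≤ C * (N:ℝ) ^ p := by
  rw [isBigO_iff] at hf
  obtain ⟨C₀, hC₀⟩ := hf
  obtain ⟨N₀, hN₀⟩ := eventually_atTop.mp hC₀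
  set N₁ : ℕ := max N₀ 1 with hN₁def
  have hN₁1 : 1 ≤ N₁ := le_max_right _ _
  have hN₁R : (0:ℝ) < (N₁:ℝ) := by exact_mod_cast hN₁1
  set c : ℝ := min ((N₁:ℝ) ^ p) 1 with hcdef
  have hc0 : 0 < c := lt_min (Real.rpow_pos_of_pos hN₁R p) one_pos
  refine ⟨max C₀ 0 + (N₁:ℝ)/c + 1, by positivity, fun N hN => ?_⟩
  have hN0 : (0:ℝ) < (N:ℝ) := by exact_mod_cast hN
  have hNp : (0:ℝ) < (N:ℝ) ^ p := Real.rpow_pos_of_pos hN0 p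
  have hCle : C₀ ≤ max C₀ 0 + (N₁:ℝ)/c + 1 := by
    have h1 : C₀ ≤ max C₀ 0 := le_max_left _ _
    have h2 : (0:ℝ) ≤ (N₁:ℝ)/c := by positivity
    linarith
  rcases le_or_gt N₁ N with h | h
  · have hb := hN₀ N (le_trans (le_max_left _ _) h)
    rw [Real.norm_eq_abs, Real.norm_eq_abs, abs_of_pos hNp] at hb
    calc |f N| ≤ C₀ * (N:ℝ) ^ p := hb
      _ ≤ (max C₀ 0 + (N₁:ℝ)/c + 1) * (N:ℝ) ^ p :=
          mul_le_mul_of_nonneg_right hCle hNp.le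
  · have hcN : c ≤ (N:ℝ) ^ p := by
      rcases le_or_gt 0 p with hp | hp
      · refine le_trans (min_le_right _ _) ?_
        have h1 : (1:ℝ) ^ p ≤ (N:ℝ) ^ p :=
          Real.rpow_le_rpow zero_le_one (by exact_mod_cast hN) hp
        simpa using h1
      · refine le_trans (min_le_left _ _) ?_
        exact Real.rpow_le_rpow_of_nonpos hN0 (by exact_mod_cast h.le) hp.le
    calc |f N| ≤ (N:ℝ) := hcrude N
      _ ≤ (N₁:ℝ) := by exact_mod_cast h.le
      _ = ((N₁:ℝ)/c) * c := by field_simp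
      _ ≤ ((N₁:ℝ)/c) * ((N:ℝ) ^ p) := mul_le_mul_of_nonneg_left hcN (by positivity)
      _ ≤ (max C₀ 0 + (N₁:ℝ)/c + 1) * (N:ℝ) ^ p := by
          refine mul_le_mul_of_nonneg_right ?_ hNp.le
          have h1 : (0:ℝ) ≤ max C₀ 0 := le_max_right _ _
          linarith

lemma gn_bound {α C : ℝ} (hα0 : 0 < α) (hα2 : α < 1) (hC : 0 < C)
    (hMb : ∀ N : ℕ, 1 ≤ N → |Mn N| ≤ C * (N:ℝ) ^ α) :
    ∃ C' : ℝ, 0 < C' ∧ ∀ N : ℕ, 1 ≤ N → |gn N| ≤ C' * (N:ℝ) ^ (α - 1) := by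
  set h : ℕ → ℝ := fun n => Mn n * (((n:ℝ))⁻¹ - ((n:ℝ) + 1)⁻¹) with hhdef
  have hq : α - 2 < -1 := by linarith
  have hhb : ∀ n : ℕ, ‖h n‖ ≤ 2 * C * (n:ℝ) ^ (α - 2) := by
    intro n
    have hb := hs_bound hα0 hα2 hC hMb (le_refl (1:ℝ)) one_le_two n
    rw [hhdef, Real.norm_eq_abs]
    show |Mn n * (((n:ℝ))⁻¹ - ((n:ℝ) + 1)⁻¹)| ≤ _
    rw [← Real.rpow_neg_one (n:ℝ), ← Real.rpow_neg_one ((n:ℝ) + 1)]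
    exact hb
  have hsum : Summable h :=
    Summable.of_norm_bounded (bound_summable hα2 (C := C)) hhb
  have hT : ∑' n, h n = 0 := T_zero hα0 hα2 hC hMb
  set c2 : ℝ := (2:ℝ) ^ (-(α-2)) / (-(α - 2 + 1)) with hc2def
  have hc2pos : 0 < c2 := by
    apply div_pos (Real.rpow_pos_of_pos (by norm_num) _)
    linarith
  refine ⟨C + 2 * C * c2, by positivity, fun N hN => ?_⟩
  have hN1 : (1:ℝ) ≤ (N:ℝ) := by exact_mod_cast hN
  have hN0 : (0:ℝ) < (N:ℝ) := by linarith
  have h1 : gn N = Mn N * ((N:ℝ))⁻¹ + ∑ n ∈ Finset.range N, h n := by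
    rw [gn_eq N, sum_range_eq_Icc _ (by simp [hhdef, Mn_zero]) N]
  have h2 : ∑ n ∈ Finset.range N, h n = ∑' n, h n - ∑' k, h (k + N) := by
    have := Summable.sum_add_tsum_nat_add N hsum
    linarith
  have hsumtail : Summable (fun k => h (k + N)) := (summable_nat_add_iff N).mpr hsum
  have hsumtailnorm : Summable (fun k => ‖h (k + N)‖) :=
    ((summable_nat_add_iff N).mpr hsum.abs)
  have hsumbnd : Summable (fun k : ℕ => 2 * C * ((N + k : ℕ):ℝ) ^ (α - 2)) :=
    (tail_summable hq N).mul_left _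
  have htail : |∑' k, h (k + N)| ≤ 2 * C * c2 * (N:ℝ) ^ (α - 1) := by
    calc |∑' k, h (k + N)| ≤ ∑' k, ‖h (k + N)‖ := by
          simpa using norm_tsum_le_tsum_norm hsumtailnorm
      _ ≤ ∑' k : ℕ, 2 * C * ((N + k : ℕ):ℝ) ^ (α - 2) := by
          refine hsumtailnorm.tsum_le_tsum (fun k => ?_) hsumbnd
          have := hhb (k + N)
          rw [show N + k = k + N by omega]
          exact this
      _ = 2 * C * ∑' k : ℕ, ((N + k : ℕ):ℝ) ^ (α - 2) := tsum_mul_left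
      _ ≤ 2 * C * (c2 * (N:ℝ) ^ (α - 2 + 1)) := by
          refine mul_le_mul_of_nonneg_left ?_ (by positivity)
          exact tail_tsum_le hq hN
      _ = 2 * C * c2 * (N:ℝ) ^ (α - 1) := by
          rw [show α - 2 + 1 = α - 1 by ring]; ring
  have hMnpart : |Mn N * ((N:ℝ))⁻¹| ≤ C * (N:ℝ) ^ (α - 1) := by
    rw [abs_mul, abs_inv, abs_of_pos hN0]
    calc |Mn N| * ((N:ℝ))⁻¹ ≤ (C * (N:ℝ) ^ α) * ((N:ℝ))⁻¹ :=
          mul_le_mul_of_nonneg_right (hMb N hN) (by positivity)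
      _ = C * (N:ℝ) ^ (α - 1) := by
          rw [Real.rpow_sub hN0, Real.rpow_one, div_eq_mul_inv]; ring
  have heq : gn N = Mn N * ((N:ℝ))⁻¹ - ∑' k, h (k + N) := by
    rw [h1, h2, hT]; ring
  rw [heq]
  calc |Mn N * ((N:ℝ))⁻¹ - ∑' k, h (k + N)|
      ≤ |Mn N * ((N:ℝ))⁻¹| + |∑' k, h (k + N)| := abs_sub _ _
    _ ≤ C * (N:ℝ) ^ (α - 1) + 2 * C * c2 * (N:ℝ) ^ (α - 1) := add_le_add hMnpart htail
    _ = (C + 2 * C * c2) * (N:ℝ) ^ (α - 1) := by ring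

lemma Mn_bound {α C : ℝ} (hα0 : 0 < α) (hα1 : α ≤ 1) (hC : 0 < C)
    (hgb : ∀ N : ℕ, 1 ≤ N → |gn N| ≤ C * (N:ℝ) ^ (α - 1)) :
    ∃ C' : ℝ, 0 < C' ∧ ∀ N : ℕ, 1 ≤ N → |Mn N| ≤ C' * (N:ℝ) ^ α := by
  refine ⟨C + C / α, by positivity, fun N hN => ?_⟩
  have hN1 : (1:ℝ) ≤ (N:ℝ) := by exact_mod_cast hN
  have hN0 : (0:ℝ) < (N:ℝ) := by linarith
  have hterm : |gn N * (N:ℝ)| ≤ C * (N:ℝ) ^ α := by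
    rw [abs_mul, abs_of_pos hN0]
    calc |gn N| * (N:ℝ) ≤ (C * (N:ℝ) ^ (α - 1)) * (N:ℝ) :=
          mul_le_mul_of_nonneg_right (hgb N hN) hN0.le
      _ = C * (N:ℝ) ^ α := by
          rw [Real.rpow_sub hN0, Real.rpow_one, div_eq_mul_inv]
          field_simp
  have hsum : |∑ n ∈ Finset.Icc 1 (N - 1), gn n| ≤ C * ((N:ℝ) ^ α / α) := by
    calc |∑ n ∈ Finset.Icc 1 (N - 1), gn n|
        ≤ ∑ n ∈ Finset.Icc 1 (N - 1), |gn n| := Finset.abs_sum_le_sum_abs _ _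
      _ ≤ ∑ n ∈ Finset.Icc 1 (N - 1), C * (n:ℝ) ^ (α - 1) :=
          Finset.sum_le_sum fun n hn => hgb n (Finset.mem_Icc.mp hn).1
      _ = C * ∑ n ∈ Finset.Icc 1 (N - 1), (n:ℝ) ^ (α - 1) := by
          rw [Finset.mul_sum]
      _ ≤ C * ∑ n ∈ Finset.Icc 1 N, (n:ℝ) ^ (α - 1) := by
          refine mul_le_mul_of_nonneg_left ?_ hC.le
          refine Finset.sum_le_sum_of_subset_of_nonneg ?_
            (fun n _ _ => Real.rpow_nonneg (Nat.cast_nonneg n) _)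
          exact Finset.Icc_subset_Icc le_rfl (by omega)
      _ ≤ C * ((N:ℝ) ^ α / α) :=
          mul_le_mul_of_nonneg_left (sum_rpow_le hα0 hα1 N) hC.le
  rw [Mn_eq N]
  calc |gn N * (N:ℝ) - ∑ n ∈ Finset.Icc 1 (N - 1), gn n|
      ≤ |gn N * (N:ℝ)| + |∑ n ∈ Finset.Icc 1 (N - 1), gn n| := abs_sub _ _
    _ ≤ C * (N:ℝ) ^ α + C * ((N:ℝ) ^ α / α) := add_le_add hterm hsum
    _ = (C + C / α) * (N:ℝ) ^ α := by ring

end MertensAux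

theorem mertens_bigO_iff (α : ℝ) (hα₁ : 1/2 ≤ α) (hα₂ : α < 1) :
    (M =O[atTop] fun x : ℝ => x ^ α) ↔ (g =O[atTop] fun x : ℝ => x ^ (α - 1)) := by
  have hα0 : 0 < α := by linarith
  constructor
  · intro hM
    have hMnat : (fun N : ℕ => MertensAux.Mn N) =O[atTop] fun N : ℕ => ((N:ℝ)) ^ α := by
      have h := hM.comp_tendsto (tendsto_natCast_atTop_atTop (R := ℝ))
      simpa [Function.comp_def, MertensAux.M_nat] using h
    obtain ⟨C, hC, hMb⟩ := MertensAux.globalize hMnat MertensAux.abs_Mn_le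
    obtain ⟨C', hC', hgb⟩ := MertensAux.gn_bound hα0 hα₂ hC hMb
    rw [isBigO_iff]
    refine ⟨C' * 2, ?_⟩
    filter_upwards [eventually_ge_atTop (1:ℝ)] with x hx
    have hx0 : (0:ℝ) < x := by linarith
    have hfl1 : 1 ≤ ⌊x⌋₊ := Nat.le_floor (by exact_mod_cast hx)
    have hflR : (1:ℝ) ≤ (⌊x⌋₊:ℝ) := by exact_mod_cast hfl1
    have hhalf : x / 2 ≤ (⌊x⌋₊:ℝ) := by
      rcases le_or_gt 2 x with h2 | h2
      · have := Nat.sub_one_lt_floor x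
        linarith
      · linarith
    have hx2 : (0:ℝ) < x / 2 := by linarith
    have h1 : ((⌊x⌋₊:ℝ)) ^ (α - 1) ≤ (x/2) ^ (α - 1) :=
      Real.rpow_le_rpow_of_nonpos hx2 hhalf (by linarith)
    have h2 : (x/2) ^ (α - 1) = x ^ (α - 1) / (2:ℝ) ^ (α - 1) :=
      Real.div_rpow hx0.le (by norm_num) _
    have hxp : (0:ℝ) ≤ x ^ (α - 1) := Real.rpow_nonneg hx0.le _
    have h6 : (0:ℝ) < (2:ℝ) ^ (α - 1) := Real.rpow_pos_of_pos two_pos _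
    have h4 : (2:ℝ) ^ (-1:ℝ) ≤ (2:ℝ) ^ (α - 1) :=
      Real.rpow_le_rpow_of_exponent_le one_le_two (by linarith)
    have h5 : (2:ℝ) ^ (-1:ℝ) = 1/2 := by
      rw [Real.rpow_neg_one]; norm_num
    have hinv : ((2:ℝ) ^ (α - 1))⁻¹ ≤ 2 := by
      have h7 : (1/2 : ℝ) ≤ (2:ℝ) ^ (α - 1) := h5 ▸ h4
      have := inv_anti₀ (by norm_num : (0:ℝ) < 1/2) h7
      simpa using this
    have h3 : x ^ (α - 1) / (2:ℝ) ^ (α - 1) ≤ 2 * x ^ (α - 1) := by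
      rw [div_eq_mul_inv]
      calc x ^ (α - 1) * ((2:ℝ) ^ (α - 1))⁻¹ ≤ x ^ (α - 1) * 2 :=
            mul_le_mul_of_nonneg_left hinv hxp
        _ = 2 * x ^ (α - 1) := by ring
    have hnorm : ‖x ^ (α - 1)‖ = x ^ (α - 1) := by
      rw [Real.norm_eq_abs, abs_of_nonneg hxp]
    rw [Real.norm_eq_abs, hnorm, MertensAux.g_eq]
    calc |MertensAux.gn ⌊x⌋₊| ≤ C' * ((⌊x⌋₊:ℝ)) ^ (α - 1) := hgb _ hfl1
      _ ≤ C' * ((x/2) ^ (α - 1)) := mul_le_mul_of_nonneg_left h1 hC'.le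
      _ ≤ C' * (2 * x ^ (α - 1)) := by
          refine mul_le_mul_of_nonneg_left ?_ hC'.le
          rw [h2]; exact h3
      _ = C' * 2 * x ^ (α - 1) := by ring
  · intro hg
    have hgnat : (fun N : ℕ => MertensAux.gn N) =O[atTop] fun N : ℕ => ((N:ℝ)) ^ (α - 1) := by
      have h := hg.comp_tendsto (tendsto_natCast_atTop_atTop (R := ℝ))
      simpa [Function.comp_def, MertensAux.g_nat] using h
    obtain ⟨C, hC, hgb⟩ := MertensAux.globalize hgnat MertensAux.abs_gn_le
    obtain ⟨C', hC', hMb⟩ := MertensAux.Mn_bound hα0 hα₂.le hC hgb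
    rw [isBigO_iff]
    refine ⟨C', ?_⟩
    filter_upwards [eventually_ge_atTop (1:ℝ)] with x hx
    have hx0 : (0:ℝ) < x := by linarith
    have hfl1 : 1 ≤ ⌊x⌋₊ := Nat.le_floor (by exact_mod_cast hx)
    have hxp : (0:ℝ) ≤ x ^ α := Real.rpow_nonneg hx0.le _
    have hnorm : ‖x ^ α‖ = x ^ α := by rw [Real.norm_eq_abs, abs_of_nonneg hxp]
    rw [Real.norm_eq_abs, hnorm, MertensAux.M_eq]
    calc |MertensAux.Mn ⌊x⌋₊| ≤ C' * ((⌊x⌋₊:ℝ)) ^ α := hMb _ hfl1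
      _ ≤ C' * x ^ α := by
          refine mul_le_mul_of_nonneg_left ?_ hC'.le
          exact Real.rpow_le_rpow (by positivity) (Nat.floor_le hx0.le) hα0.le
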